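/- Let Y be a Banach space such that every closed subspace X of Y has property wU in Y (every norm-attaining functional on X has a unique Hahn–Banach extension to Y). Then the norm of Y is Gâteaux differentiable, i.e., for every y ∈ S_Y there is a unique y* ∈ S_{Y*} with y*(y) = 1. -/

import Mathlib

/-- If every closed subspace `X` of a Banach space `Y` has property wU in `Y`
(every norm-attaining functional on `X` has a unique Hahn–Banach extension to `Y`),
then the norm of `Y` is Gâteaux differentiable: for every `y ∈ S_Y` there is a unique
`y* ∈ S_{Y*}` with `y*(y) = 1`. -/
theorem gateaux_smooth_of_propertyWU
    (Y : Type*) [NormedAddCommGroup Y] [NormedSpace ℝ Y] [CompleteSpace Y]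
    (hwU : ∀ X : Subspace ℝ Y, IsClosed (X : Set Y) →
      ∀ f : X →L[ℝ] ℝ, (∃ x : X, ‖x‖ = 1 ∧ f x = ‖f‖) →
        ∃! g : Y →L[ℝ] ℝ, (∀ x : X, g x = f x) ∧ ‖g‖ = ‖f‖) :
    ∀ y : Y, ‖y‖ = 1 → ∃! g : Y →L[ℝ] ℝ, ‖g‖ = 1 ∧ g y = 1 := by
  intro y hy
  have hy0 : y ≠ 0 := by
    intro h; rw [h, norm_zero] at hy; norm_num at hy
  obtain ⟨g₀, hg₀, hg₀y⟩ := exists_dual_vector ℝ y (norm_ne_zero_iff.mpr hy0)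
  rw [hy] at hg₀y
  set X : Subspace ℝ Y := Submodule.span ℝ {y} with hX
  haveI : FiniteDimensional ℝ X := by
    apply FiniteDimensional.span_of_finite; exact Set.finite_singleton y
  have hXc : IsClosed (X : Set Y) := Submodule.closed_of_finiteDimensional X
  set f : X →L[ℝ] ℝ := g₀.comp X.subtypeL with hf
  have hyX : y ∈ X := Submodule.mem_span_singleton_self y
  have hfy : f ⟨y, hyX⟩ = 1 := hg₀y
  have hfnorm : ‖f‖ = 1 := by
    apply le_antisymm
    · apply ContinuousLinearMap.opNorm_le_bound _ zero_le_one
      intro x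
      have := g₀.le_opNorm (x : Y)
      rw [hg₀] at this
      simpa [hf] using this
    · have := f.le_opNorm ⟨y, hyX⟩
      rw [hfy] at this
      have hny : ‖(⟨y, hyX⟩ : X)‖ = 1 := hy
      rw [hny, mul_one] at this
      simpa using this
  -- restriction key lemma: any g with g y = 1 agrees with f on X
  have key : ∀ g : Y →L[ℝ] ℝ, g y = 1 → ∀ x : X, g x = f x := by
    intro g hgy x
    obtain ⟨c, hc⟩ := Submodule.mem_span_singleton.mp x.2
    have hx : (x : Y) = c • y := hc.symm
    simp only [hf, ContinuousLinearMap.comp_apply, Submodule.subtypeL_apply]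
    rw [hx, map_smul, map_smul, hgy, hg₀y]; norm_num
  obtain ⟨g, ⟨hgext, hgnorm⟩, huniq⟩ := hwU X hXc f
    ⟨⟨y, hyX⟩, hy, by rw [hfy, hfnorm]⟩
  have hgy : g y = 1 := by
    have := hgext ⟨y, hyX⟩
    rw [hfy] at this; exact this
  refine ⟨g, ⟨by rw [hgnorm, hfnorm], hgy⟩, ?_⟩
  intro g' ⟨hg'n, hg'y⟩
  exact huniq g' ⟨key g' hg'y, by rw [hg'n, hfnorm]⟩
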